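/- Let L be a type of labels and let X = (V, E, s, t) be an L-labeled bipointed digraph with V finite. Then X admits a retraction r : X → X (a morphism with r ∘ r = r) such that the retract determined by r is pruned: the induced structure on Set.range r (with edge relation the restriction of E and basepoints s, t) admits no retraction other than the identity. -/

import Mathlib

/-- A morphism of `L`-labeled bipointed digraphs `(V, E, s, t) → (W, F, s', t')`:
a map on vertices preserving the start vertex, the end vertex, and labeled edges. -/
def IsLBDMorphism {L V W : Type*} (E : V → V → L → Prop) (s t : V)
    (F : W → W → L → Prop) (s' t' : W) (f : V → W) : Prop :=
  f s = s' ∧ f t = t' ∧ ∀ u v a, E u v a → F (f u) (f v) a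

/-- An `L`-labeled bipointed digraph is pruned if its only retraction
(idempotent morphism to itself) is the identity. -/
def IsPrunedLBD {L V : Type*} (E : V → V → L → Prop) (s t : V) : Prop :=
  ∀ r : V → V, IsLBDMorphism E s t E s t r → r ∘ r = r → r = id

/-- Every finite `L`-labeled bipointed digraph admits a retraction `r` whose retract
(the induced structure on `Set.range r`, with the restricted edge relation and the same
basepoints) is pruned, i.e. admits no retraction other than the identity. -/
theorem exists_pruned_retract
    {L V : Type*} [Finite V] (E : V → V → L → Prop) (s t : V) :
    ∃ r : V → V, IsLBDMorphism E s t E s t r ∧ r ∘ r = r ∧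
      ∃ (hs : s ∈ Set.range r) (ht : t ∈ Set.range r),
        IsPrunedLBD (fun (x y : Set.range r) (a : L) => E (x : V) (y : V) a)
          ⟨s, hs⟩ ⟨t, ht⟩ := by
  classical
  set P : (V → V) → Prop := fun r => IsLBDMorphism E s t E s t r ∧ r ∘ r = r with hP
  set S : Set ℕ := {k | ∃ r, P r ∧ (Set.range r).ncard = k} with hS
  have hSne : S.Nonempty := ⟨(Set.range (id : V → V)).ncard, id, ⟨⟨rfl, rfl, fun _ _ _ h => h⟩, rfl⟩, rfl⟩
  obtain ⟨r, hPr, hcard⟩ : ∃ r, P r ∧ (Set.range r).ncard = sInf S := Nat.sInf_mem hSne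
  obtain ⟨hmor, hidem⟩ := hPr
  have hfix : ∀ v, r (r v) = r v := fun v => congrFun hidem v
  have hs : s ∈ Set.range r := ⟨s, hmor.1⟩
  have ht : t ∈ Set.range r := ⟨t, hmor.2.1⟩
  refine ⟨r, hmor, hidem, hs, ht, ?_⟩
  intro r' hmor' hidem'
  by_contra hne
  obtain ⟨x, hx⟩ : ∃ x, r' x ≠ x := by
    by_contra h
    push_neg at h
    exact hne (funext h)
  -- x is not in the range of r'
  have hxnr : x ∉ Set.range r' := by
    rintro ⟨y, rfl⟩
    exact hx (congrFun hidem' y)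
  have hrfix : ∀ x : Set.range r, r (x : V) = (x : V) := by
    rintro ⟨_, v, rfl⟩; exact hfix v
  -- define the composed retraction
  set q : V → V := fun v => (r' ⟨r v, ⟨v, rfl⟩⟩ : V) with hq
  have hqs : q s = s := by
    have : (⟨r s, ⟨s, rfl⟩⟩ : Set.range r) = ⟨s, hs⟩ := Subtype.ext hmor.1
    simp [hq, this, hmor'.1]
  have hqt : q t = t := by
    have : (⟨r t, ⟨t, rfl⟩⟩ : Set.range r) = ⟨t, ht⟩ := Subtype.ext hmor.2.1
    simp [hq, this, hmor'.2.1]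
  have hqmor : IsLBDMorphism E s t E s t q :=
    ⟨hqs, hqt, fun u v a h => hmor'.2.2 _ _ a (hmor.2.2 u v a h)⟩
  have hqidem : q ∘ q = q := by
    funext v
    have h1 : (⟨r (q v), ⟨q v, rfl⟩⟩ : Set.range r) = r' ⟨r v, ⟨v, rfl⟩⟩ :=
      Subtype.ext (hrfix _)
    simp only [Function.comp_apply, hq, h1]
    exact congrArg Subtype.val ((congrArg r' (Subtype.ext (hrfix _))).trans (congrFun hidem' _))
  -- range q = val '' range r'
  have hrangeq : Set.range q = Subtype.val '' Set.range r' := by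
    ext v
    constructor
    · rintro ⟨u, rfl⟩
      exact ⟨r' ⟨r u, ⟨u, rfl⟩⟩, ⟨_, rfl⟩, rfl⟩
    · rintro ⟨y, ⟨z, rfl⟩, rfl⟩
      refine ⟨(z : V), ?_⟩
      have : (⟨r (z : V), ⟨(z : V), rfl⟩⟩ : Set.range r) = z := Subtype.ext (hrfix z)
      simp [hq, this]
  have hsub : Set.range q ⊂ Set.range r := by
    constructor
    · rw [hrangeq]
      rintro v ⟨y, _, rfl⟩
      exact y.2
    · intro hcontra
      have hxmem : (x : V) ∈ Set.range q := hcontra x.2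
      rw [hrangeq] at hxmem
      obtain ⟨y, hy, hyx⟩ := hxmem
      obtain ⟨z, hz⟩ := hy
      exact hxnr ⟨z, hz.trans (Subtype.ext hyx)⟩
  have hlt : (Set.range q).ncard < (Set.range r).ncard :=
    Set.ncard_lt_ncard hsub (Set.toFinite _)
  have : sInf S ≤ (Set.range q).ncard := Nat.sInf_le ⟨q, ⟨hqmor, hqidem⟩, rfl⟩
  rw [hcard] at hlt
  omega
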